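/- Let f(S) = 2·W₂²(S, Id₂) − W₂²(S, 9·Id₂) for 2×2 symmetric positive definite real matrices S. Then (i) 2·GM(S^{-1}, Id₂) − GM(S^{-1}, 9·Id₂) = −S^{-1/2}, so the Euclidean gradient Id₂ − (2·GM(S^{-1}, Id₂) − GM(S^{-1}, 9·Id₂)) = Id₂ + S^{-1/2} is positive definite for every such S; (ii) f(S) = Tr(S) + 2·Tr(S^{1/2}) − 14 > −14 for every such S, while the infimum of f over the 2×2 symmetric positive definite matrices equals −14; hence f attains no minimum (and has no stationary point) on the symmetric positive definite matrices. -/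

import Mathlib

open Matrix BigOperators Finset
open scoped Classical

/-- Unique positive semidefinite square root of a positive semidefinite matrix
(and junk value `0` on other matrices). -/
noncomputable def msqrt {d : ℕ} (M : Matrix (Fin d) (Fin d) ℝ) :
    Matrix (Fin d) (Fin d) ℝ :=
  if h : M.PosSemidef then
    h.1.eigenvectorUnitary.1 * diagonal ((RCLike.ofReal : ℝ → ℝ) ∘ Real.sqrt ∘ h.1.eigenvalues) *
      (star h.1.eigenvectorUnitary : Matrix (Fin d) (Fin d) ℝ)
  else 0

/-- Smallest eigenvalue of a symmetric matrix (junk value `0` otherwise). -/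
noncomputable def lmin {d : ℕ} (M : Matrix (Fin d) (Fin d) ℝ) : ℝ :=
  if h : M.IsHermitian then ⨅ i, h.eigenvalues i else 0

/-- Largest eigenvalue of a symmetric matrix (junk value `0` otherwise). -/
noncomputable def lmax {d : ℕ} (M : Matrix (Fin d) (Fin d) ℝ) : ℝ :=
  if h : M.IsHermitian then ⨆ i, h.eigenvalues i else 0

/-- Squared Bures–Wasserstein distance. -/
noncomputable def W2sq {d : ℕ} (A B : Matrix (Fin d) (Fin d) ℝ) : ℝ :=
  A.trace + B.trace - 2 * (msqrt (msqrt A * B * msqrt A)).trace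

/-- The conditional barycenter objective `F`. -/
noncomputable def Fobj {d n : ℕ} (Sig : Fin n → Matrix (Fin d) (Fin d) ℝ)
    (lam : Fin n → ℝ) (S : Matrix (Fin d) (Fin d) ℝ) : ℝ :=
  ∑ k, lam k * W2sq S (Sig k)

/-- Geometric mean `GM(S⁻¹, Σ) = S^{-1/2} (S^{1/2} Σ S^{1/2})^{1/2} S^{-1/2}`. -/
noncomputable def GMinv {d : ℕ} (S Sigma : Matrix (Fin d) (Fin d) ℝ) :
    Matrix (Fin d) (Fin d) ℝ :=
  (msqrt S)⁻¹ * msqrt (msqrt S * Sigma * msqrt S) * (msqrt S)⁻¹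

/-- The Spectral Dominance of Positive Weights condition. -/
def SDPW {d n : ℕ} (Sig : Fin n → Matrix (Fin d) (Fin d) ℝ) (lam : Fin n → ℝ) : Prop :=
  ∑ j ∈ Finset.univ.filter (fun k => lam k < 0), (-lam j) * Real.sqrt (lmax (Sig j))
    < ∑ i ∈ Finset.univ.filter (fun k => 0 < lam k), lam i * Real.sqrt (lmin (Sig i))

/-- The function of Example 1: `f(S) = 2 W₂²(S, I₂) − W₂²(S, 9 I₂)`. -/
noncomputable def f18 (S : Matrix (Fin 2) (Fin 2) ℝ) : ℝ :=
  2 * W2sq S 1 - W2sq S ((9 : ℝ) • 1)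

open scoped MatrixOrder

lemma msqrt_psd {d : ℕ} {M : Matrix (Fin d) (Fin d) ℝ} (h : M.PosSemidef) :
    msqrt M = CFC.sqrt M := by
  rw [CFC.sqrt_eq_real_sqrt M h.nonneg, cfcₙ_eq_cfc (hf0 := Real.sqrt_zero), h.1.cfc_eq, IsHermitian.cfc, msqrt, dif_pos h,
    Unitary.conjStarAlgAut_apply]

lemma msqrt_posSemidef {d : ℕ} {M : Matrix (Fin d) (Fin d) ℝ} (h : M.PosSemidef) :
    (msqrt M).PosSemidef := by rw [msqrt_psd h]; exact (CFC.sqrt_nonneg M).posSemidef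

lemma msqrt_mul_self {d : ℕ} {M : Matrix (Fin d) (Fin d) ℝ} (h : M.PosSemidef) :
    msqrt M * msqrt M = M := by rw [msqrt_psd h]; exact CFC.sqrt_mul_sqrt_self M h.nonneg

lemma msqrt_unique {d : ℕ} {A B : Matrix (Fin d) (Fin d) ℝ} (hA : A.PosSemidef)
    (hB : B.PosSemidef) (hab : A * A = B) : msqrt B = A := by
  rw [msqrt_psd hB]
  exact CFC.sqrt_unique hab hA.nonneg

lemma posDef_smul {d : ℕ} {M : Matrix (Fin d) (Fin d) ℝ} {c : ℝ} (hc : 0 < c)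
    (hM : M.PosDef) : (c • M).PosDef := by
  refine .of_dotProduct_mulVec_pos ?_ (fun x hx => ?_)
  · unfold Matrix.IsHermitian
    rw [conjTranspose_smul, hM.1]
    simp
  · rw [smul_mulVec, dotProduct_smul, smul_eq_mul]
    exact mul_pos hc (hM.dotProduct_mulVec_pos hx)

lemma posSemidef_smul {d : ℕ} {M : Matrix (Fin d) (Fin d) ℝ} {c : ℝ} (hc : 0 ≤ c)
    (hM : M.PosSemidef) : (c • M).PosSemidef := by
  refine .of_dotProduct_mulVec_nonneg ?_ (fun x => ?_)
  · unfold Matrix.IsHermitian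
    rw [conjTranspose_smul, hM.1]
    simp
  · rw [smul_mulVec, dotProduct_smul, smul_eq_mul]
    exact mul_nonneg hc (hM.dotProduct_mulVec_nonneg x)

lemma posDef_one' {d : ℕ} : (1 : Matrix (Fin d) (Fin d) ℝ).PosDef := by
  refine .of_dotProduct_mulVec_pos isHermitian_one (fun x hx => ?_)
  rw [one_mulVec]
  exact dotProduct_star_self_pos_iff.mpr hx

lemma msqrt_posDef {d : ℕ} {S : Matrix (Fin d) (Fin d) ℝ} (hS : S.PosDef) :
    (msqrt S).PosDef := by
  have hpsd := msqrt_posSemidef hS.posSemidef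
  refine .of_dotProduct_mulVec_pos hpsd.1 (fun x hx => lt_of_le_of_ne (hpsd.dotProduct_mulVec_nonneg x) fun h => ?_)
  have h0 : msqrt S *ᵥ x = 0 := (hpsd.dotProduct_mulVec_zero_iff x).mp h.symm
  have : S *ᵥ x = 0 := by
    rw [← msqrt_mul_self hS.posSemidef, ← mulVec_mulVec, h0, mulVec_zero]
  have hpos := hS.dotProduct_mulVec_pos hx
  rw [this] at hpos
  simp at hpos

lemma mytrace_pos {d : ℕ} [NeZero d] {S : Matrix (Fin d) (Fin d) ℝ} (hS : S.PosDef) :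
    0 < S.trace := by
  have h : ∀ i, 0 < S i i := by
    intro i
    have hnz : (Pi.single i 1 : Fin d → ℝ) ≠ 0 := fun hz => by
      have h1 : (Pi.single i 1 : Fin d → ℝ) i = 0 := by rw [hz]; rfl
      simp at h1
    have := hS.dotProduct_mulVec_pos hnz
    simpa [dotProduct, mulVec, Pi.single_apply, Finset.sum_ite_eq, Finset.sum_ite_eq'] using this
  exact Finset.sum_pos (fun i _ => h i) ⟨0, Finset.mem_univ 0⟩

section Helpers2
variable {d : ℕ} {S : Matrix (Fin d) (Fin d) ℝ}

lemma key1 (hS : S.PosDef) : msqrt (msqrt S * 1 * msqrt S) = msqrt S := by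
  rw [mul_one, msqrt_mul_self hS.posSemidef]

lemma key9 (hS : S.PosDef) :
    msqrt (msqrt S * ((9 : ℝ) • 1) * msqrt S) = (3 : ℝ) • msqrt S := by
  have h1 : msqrt S * ((9 : ℝ) • 1) * msqrt S = (9 : ℝ) • S := by
    rw [mul_smul_comm, mul_one, smul_mul_assoc, msqrt_mul_self hS.posSemidef]
  rw [h1]
  refine msqrt_unique (posSemidef_smul (by norm_num) (msqrt_posSemidef hS.posSemidef))
    (posSemidef_smul (by norm_num) hS.posSemidef) ?_
  rw [smul_mul_assoc, mul_smul_comm, smul_smul, msqrt_mul_self hS.posSemidef]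
  norm_num

lemma inv_mul_msqrt (hS : S.PosDef) : (msqrt S)⁻¹ * msqrt S = 1 :=
  Matrix.nonsing_inv_mul _ (msqrt_posDef hS).det_pos.ne'.isUnit

lemma GMinv_one (hS : S.PosDef) : GMinv S 1 = (msqrt S)⁻¹ := by
  rw [GMinv, key1 hS, inv_mul_msqrt hS, one_mul]

lemma GMinv_nine (hS : S.PosDef) : GMinv S ((9 : ℝ) • 1) = (3 : ℝ) • (msqrt S)⁻¹ := by
  rw [GMinv, key9 hS, mul_smul_comm, smul_mul_assoc, inv_mul_msqrt hS, one_mul]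

end Helpers2

lemma f18_eq {S : Matrix (Fin 2) (Fin 2) ℝ} (hS : S.PosDef) :
    f18 S = S.trace + 2 * (msqrt S).trace - 14 := by
  have h1 : (1 : Matrix (Fin 2) (Fin 2) ℝ).trace = 2 := by
    simp [Matrix.trace_one]
  rw [f18, W2sq, W2sq, key1 hS, key9 hS, h1, Matrix.trace_smul, Matrix.trace_smul, h1]
  simp only [smul_eq_mul]
  ring

lemma f18_gt {S : Matrix (Fin 2) (Fin 2) ℝ} (hS : S.PosDef) : -14 < f18 S := by
  rw [f18_eq hS]
  have h1 := mytrace_pos hS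
  have h2 := mytrace_pos (msqrt_posDef hS)
  linarith

lemma f18_smul_one {t : ℝ} (ht : 0 < t) :
    f18 (t • (1 : Matrix (Fin 2) (Fin 2) ℝ)) = 2 * t + 4 * Real.sqrt t - 14 := by
  have hPD := posDef_smul ht (posDef_one' (d := 2))
  have hm : msqrt (t • (1 : Matrix (Fin 2) (Fin 2) ℝ)) = Real.sqrt t • 1 := by
    refine msqrt_unique (posSemidef_smul (Real.sqrt_nonneg t) posDef_one'.posSemidef)
      hPD.posSemidef ?_
    rw [smul_mul_assoc, mul_smul_comm, smul_smul, mul_one, Real.mul_self_sqrt ht.le]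
  rw [f18_eq hPD, hm, Matrix.trace_smul, Matrix.trace_smul]
  have h1 : (1 : Matrix (Fin 2) (Fin 2) ℝ).trace = 2 := by simp [Matrix.trace_one]
  rw [h1]
  simp only [smul_eq_mul]
  ring

/-- in Example 1, (i) `2 GM(S⁻¹, I) − GM(S⁻¹, 9I) = −S^(-1/2)` so the
Euclidean gradient `I + S^(-1/2)` is positive definite everywhere; (ii)
`f(S) = Tr S + 2 Tr S^(1/2) − 14 > −14`, the infimum of `f` over the positive definite
matrices is `−14`, hence `f` attains no minimum and has no stationary point. -/
theorem stmt18 :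
    (∀ S : Matrix (Fin 2) (Fin 2) ℝ, S.PosDef →
      (2 : ℝ) • GMinv S 1 - GMinv S ((9 : ℝ) • 1) = -(msqrt S)⁻¹ ∧
      ((1 : Matrix (Fin 2) (Fin 2) ℝ) + (msqrt S)⁻¹).PosDef) ∧
    (∀ S : Matrix (Fin 2) (Fin 2) ℝ, S.PosDef →
      f18 S = S.trace + 2 * (msqrt S).trace - 14 ∧ -14 < f18 S) ∧
    IsGLB {x : ℝ | ∃ S : Matrix (Fin 2) (Fin 2) ℝ, S.PosDef ∧ f18 S = x} (-14) ∧
    ¬ (∃ S : Matrix (Fin 2) (Fin 2) ℝ, S.PosDef ∧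
        ∀ S' : Matrix (Fin 2) (Fin 2) ℝ, S'.PosDef → f18 S ≤ f18 S') ∧
    ¬ (∃ S : Matrix (Fin 2) (Fin 2) ℝ, S.PosDef ∧
        S = (2 : ℝ) • msqrt (msqrt S * 1 * msqrt S)
          - msqrt (msqrt S * ((9 : ℝ) • 1) * msqrt S)) := by

  have glb : IsGLB {x : ℝ | ∃ S : Matrix (Fin 2) (Fin 2) ℝ, S.PosDef ∧ f18 S = x} (-14) := by
    constructor
    · rintro x ⟨S, hS, rfl⟩
      exact (f18_gt hS).le
    · intro b hb
      by_contra hlt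
      push_neg at hlt
      have hδ0 : 0 < b + 14 := by linarith
      set s := min ((b + 14) / 8) 1 with hs
      have hs0 : 0 < s := lt_min (by linarith) one_pos
      have hs1 : s ≤ 1 := min_le_right _ _
      have hsd : s ≤ (b + 14) / 8 := min_le_left _ _
      have ht : 0 < s ^ 2 := by positivity
      have hmem : f18 (s ^ 2 • (1 : Matrix (Fin 2) (Fin 2) ℝ)) ∈
          {x : ℝ | ∃ S : Matrix (Fin 2) (Fin 2) ℝ, S.PosDef ∧ f18 S = x} :=
        ⟨s ^ 2 • 1, posDef_smul ht posDef_one', rfl⟩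
      have hble := hb hmem
      rw [f18_smul_one ht, Real.sqrt_sq hs0.le] at hble
      nlinarith [mul_nonneg hs0.le (sub_nonneg.mpr hs1)]
  refine ⟨?_, ?_, glb, ?_, ?_⟩
  · intro S hS
    refine ⟨?_, ?_⟩
    · rw [GMinv_one hS, GMinv_nine hS, ← sub_smul]
      norm_num
    · exact posDef_one'.add (msqrt_posDef hS).inv
  · intro S hS
    exact ⟨f18_eq hS, f18_gt hS⟩
  · rintro ⟨S, hS, hmin⟩
    have hlb : f18 S ∈ lowerBounds {x : ℝ | ∃ S : Matrix (Fin 2) (Fin 2) ℝ,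
        S.PosDef ∧ f18 S = x} := by
      rintro x ⟨S', hS', rfl⟩
      exact hmin S' hS'
    exact absurd (glb.2 hlb) (not_le.mpr (f18_gt hS))
  · rintro ⟨S, hS, hstat⟩
    rw [key1 hS, key9 hS, ← sub_smul] at hstat
    norm_num at hstat
    have h1 := mytrace_pos hS
    have h2 := mytrace_pos (msqrt_posDef hS)
    rw [hstat, Matrix.trace_neg] at h1
    linarith
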